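/- For jointly distributed finite-alphabet random variables X^n, Y^n, the conditional distribution factorizes causally, i.e., P(Y^n = y^n | X^n = x^n) = Π_{i=0}^n P(Y_i = y_i | Y^{i-1} = y^{i-1}, X^i = x^i) for all x^n with positive probability, if and only if for each i = 0,...,n-1 the Markov chain Y_i ↔ (X^i, Y^{i-1}) ↔ (X_{i+1},...,X_n) holds. -/

import Mathlib

open Finset
open scoped Classical

/-- Probability of an event under a pmf `p` on a finite sample space. -/
noncomputable def pr {Ω : Type} [Fintype Ω] (p : Ω → ℝ) (E : Ω → Prop) : ℝ :=
  ∑ ω, if E ω then p ω else 0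

/-- Conditional mutual information `I(f; g | h)` of random variables on a finite
sample space, via `I(A;B|C) = E[log (p(a,b,c) p(c) / (p(a,c) p(b,c)))]`. -/
noncomputable def condMI {Ω A B C : Type} [Fintype Ω] (p : Ω → ℝ)
    (f : Ω → A) (g : Ω → B) (h : Ω → C) : ℝ :=
  ∑ ω, p ω * Real.log
    ((pr p (fun ω' => f ω' = f ω ∧ g ω' = g ω ∧ h ω' = h ω) *
      pr p (fun ω' => h ω' = h ω)) /
     (pr p (fun ω' => f ω' = f ω ∧ h ω' = h ω) *
      pr p (fun ω' => g ω' = g ω ∧ h ω' = h ω)))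

/-- Mutual information `I(f; g)`. -/
noncomputable def mutInfoRV {Ω A B : Type} [Fintype Ω] (p : Ω → ℝ)
    (f : Ω → A) (g : Ω → B) : ℝ :=
  condMI p f g (fun _ => ())

/-- The prefix `Z^i = (Z_0, …, Z_i)` of a sequence-valued random variable. -/
def pref {Ω α : Type} {n : ℕ} (Z : Ω → Fin (n + 1) → α) (i : Fin (n + 1)) :
    Ω → Fin (i.1 + 1) → α :=
  fun ω j => Z ω (Fin.castLE i.isLt j)

/-- The strict prefix `Z^{i-1} = (Z_0, …, Z_{i-1})`. -/
def spref {Ω α : Type} {n : ℕ} (Z : Ω → Fin (n + 1) → α) (i : Fin (n + 1)) :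
    Ω → Fin i.1 → α :=
  fun ω j => Z ω (Fin.castLE i.isLt.le j)

/-- Directed information `I(X^n → Y^n) = ∑_{i=0}^n I(X^i; Y_i | Y^{i-1})`. -/
noncomputable def dirInfo {Ω 𝒳 𝒴 : Type} [Fintype Ω] {n : ℕ} (p : Ω → ℝ)
    (X : Ω → Fin (n + 1) → 𝒳) (Y : Ω → Fin (n + 1) → 𝒴) : ℝ :=
  ∑ i : Fin (n + 1), condMI p (pref X i) (fun ω => Y ω i) (spref Y i)

/-- Reverse directed information `I(X^n ← Y^n) = ∑_{i=0}^n I(Y^{i-1}; X_i | X^{i-1})`. -/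
noncomputable def revDirInfo {Ω 𝒳 𝒴 : Type} [Fintype Ω] {n : ℕ} (p : Ω → ℝ)
    (X : Ω → Fin (n + 1) → 𝒳) (Y : Ω → Fin (n + 1) → 𝒴) : ℝ :=
  ∑ i : Fin (n + 1), condMI p (spref Y i) (fun ω => X ω i) (spref X i)

/-- Conditional independence of `f` and `g` given `h` (a Markov chain `f ↔ h ↔ g`),
stated via factorization of joint probability mass functions. -/
def CondIndep {Ω A B C : Type} [Fintype Ω] (p : Ω → ℝ)
    (f : Ω → A) (g : Ω → B) (h : Ω → C) : Prop :=
  ∀ (a : A) (b : B) (c : C),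
    pr p (fun ω => f ω = a ∧ g ω = b ∧ h ω = c) * pr p (fun ω => h ω = c) =
    pr p (fun ω => f ω = a ∧ h ω = c) * pr p (fun ω => g ω = b ∧ h ω = c)

theorem pr_congr {Ω : Type} [Fintype Ω] (p : Ω → ℝ) {E F : Ω → Prop}
    (h : ∀ ω, E ω ↔ F ω) : pr p E = pr p F := by
  unfold pr
  exact Finset.sum_congr rfl fun ω _ => by simp [h ω]

theorem pr_pos {Ω : Type} [Fintype Ω] {p : Ω → ℝ} (hpos : ∀ ω, 0 < p ω)
    {E : Ω → Prop} (w : Ω) (hw : E w) : 0 < pr p E := by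
  unfold pr
  refine Finset.sum_pos' (fun ω _ => ?_) ⟨w, Finset.mem_univ w, ?_⟩
  · split <;> [exact (hpos ω).le; rfl]
  · simp [hw]; exact hpos w

theorem pr_fiber {Ω α : Type} [Fintype Ω] [Fintype α] (p : Ω → ℝ)
    (f : Ω → α) (E : Ω → Prop) :
    ∑ v : α, pr p (fun ω => f ω = v ∧ E ω) = pr p E := by
  unfold pr
  rw [Finset.sum_comm]
  refine Finset.sum_congr rfl fun ω _ => ?_
  by_cases h : E ω
  · simp [h]
  · simp [h]

section ABD

variable {𝒳 𝒴 : Type} [Fintype 𝒳] [Fintype 𝒴] {n : ℕ}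

noncomputable def prD (p : (Fin (n + 1) → 𝒳) × (Fin (n + 1) → 𝒴) → ℝ)
    (x : Fin (n + 1) → 𝒳) (y : Fin (n + 1) → 𝒴) (k : ℕ) : ℝ :=
  pr p (fun z => z.1 = x ∧ ∀ j : Fin (n + 1), (j : ℕ) < k → z.2 j = y j)

noncomputable def prA (p : (Fin (n + 1) → 𝒳) × (Fin (n + 1) → 𝒴) → ℝ)
    (x : Fin (n + 1) → 𝒳) (y : Fin (n + 1) → 𝒴) (i : Fin (n + 1)) : ℝ :=
  pr p (fun z => z.2 i = y i ∧ (∀ j : Fin (n + 1), j < i → z.2 j = y j) ∧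
      (∀ j : Fin (n + 1), j ≤ i → z.1 j = x j))

noncomputable def prB (p : (Fin (n + 1) → 𝒳) × (Fin (n + 1) → 𝒴) → ℝ)
    (x : Fin (n + 1) → 𝒳) (y : Fin (n + 1) → 𝒴) (i : Fin (n + 1)) : ℝ :=
  pr p (fun z => (∀ j : Fin (n + 1), j < i → z.2 j = y j) ∧
      (∀ j : Fin (n + 1), j ≤ i → z.1 j = x j))

variable {p : (Fin (n + 1) → 𝒳) × (Fin (n + 1) → 𝒴) → ℝ}
  (x : Fin (n + 1) → 𝒳) (y : Fin (n + 1) → 𝒴)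

theorem prD_pos (hpos : ∀ z, 0 < p z) (k : ℕ) : 0 < prD p x y k :=
  pr_pos hpos (x, y) ⟨rfl, fun _ _ => rfl⟩

theorem prB_pos (hpos : ∀ z, 0 < p z) (i : Fin (n + 1)) : 0 < prB p x y i :=
  pr_pos hpos (x, y) ⟨fun _ _ => rfl, fun _ _ => rfl⟩

theorem prD_zero : prD p x y 0 = pr p (fun z => z.1 = x) :=
  pr_congr p fun z => by simp

theorem prD_last : prD p x y (n + 1) = pr p (fun z => z.1 = x ∧ z.2 = y) :=
  pr_congr p fun z => by
    constructor
    · rintro ⟨h1, h2⟩; exact ⟨h1, funext fun j => h2 j j.isLt⟩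
    · rintro ⟨h1, h2⟩; exact ⟨h1, fun j _ => by rw [h2]⟩

theorem prD_sum (i : Fin (n + 1)) :
    ∑ v : 𝒴, prD p x (Function.update y i v) (i.1 + 1) = prD p x y i.1 := by
  have : ∀ v : 𝒴, prD p x (Function.update y i v) (i.1 + 1) =
      pr p (fun z => z.2 i = v ∧ (z.1 = x ∧ ∀ j : Fin (n + 1), (j : ℕ) < i.1 → z.2 j = y j)) := by
    intro v
    refine pr_congr p fun z => ?_
    constructor
    · rintro ⟨h1, h2⟩
      refine ⟨by simpa using h2 i (by omega), h1, fun j hj => ?_⟩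
      have := h2 j (by omega)
      rwa [Function.update_of_ne (Fin.ne_of_val_ne (Nat.ne_of_lt hj)) v y] at this
    · rintro ⟨h0, h1, h2⟩
      refine ⟨h1, fun j hj => ?_⟩
      rcases eq_or_ne j i with rfl | hne
      · simpa using h0
      · rw [Function.update_of_ne hne]
        exact h2 j (by
          have : (j : ℕ) ≠ (i : ℕ) := fun h => hne (Fin.ext h)
          omega)
  rw [Finset.sum_congr rfl fun v _ => this v]
  exact pr_fiber p (fun z => z.2 i) _

theorem prA_sum (i : Fin (n + 1)) :
    ∑ v : 𝒴, prA p x (Function.update y i v) i = prB p x y i := by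
  have : ∀ v : 𝒴, prA p x (Function.update y i v) i =
      pr p (fun z => z.2 i = v ∧ ((∀ j : Fin (n + 1), j < i → z.2 j = y j) ∧
        (∀ j : Fin (n + 1), j ≤ i → z.1 j = x j))) := by
    intro v
    refine pr_congr p fun z => ?_
    constructor
    · rintro ⟨h0, h1, h2⟩
      refine ⟨by simpa using h0, fun j hj => ?_, h2⟩
      have := h1 j hj
      rwa [Function.update_of_ne (Fin.ne_of_lt hj) v y] at this
    · rintro ⟨h0, h1, h2⟩
      refine ⟨by simpa using h0, fun j hj => ?_, h2⟩
      rw [Function.update_of_ne (Fin.ne_of_lt hj)]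
      exact h1 j hj
  rw [Finset.sum_congr rfl fun v _ => this v]
  exact pr_fiber p (fun z => z.2 i) _

theorem prA_update (i j : Fin (n + 1)) (hj : j < i) (v : 𝒴) :
    prA p x (Function.update y i v) j = prA p x y j := by
  refine pr_congr p fun z => ?_
  have hji : j ≠ i := Fin.ne_of_lt hj
  rw [Function.update_of_ne hji]
  constructor
  · rintro ⟨h0, h1, h2⟩
    exact ⟨h0, fun k hk => by
      have := h1 k hk
      rwa [Function.update_of_ne (Fin.ne_of_lt (hk.trans hj))] at this, h2⟩
  · rintro ⟨h0, h1, h2⟩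
    exact ⟨h0, fun k hk => by
      rw [Function.update_of_ne (Fin.ne_of_lt (hk.trans hj))]
      exact h1 k hk, h2⟩

theorem prB_update (i j : Fin (n + 1)) (hj : j ≤ i) (v : 𝒴) :
    prB p x (Function.update y i v) j = prB p x y j := by
  refine pr_congr p fun z => ?_
  constructor
  · rintro ⟨h1, h2⟩
    exact ⟨fun k hk => by
      have := h1 k hk
      rwa [Function.update_of_ne (Fin.ne_of_lt (lt_of_lt_of_le hk hj))] at this, h2⟩
  · rintro ⟨h1, h2⟩
    exact ⟨fun k hk => by
      rw [Function.update_of_ne (Fin.ne_of_lt (lt_of_lt_of_le hk hj))]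
      exact h1 k hk, h2⟩

end ABD

section MAIN

variable {𝒳 𝒴 : Type} [Fintype 𝒳] [Fintype 𝒴] {n : ℕ}

noncomputable def prF (p : (Fin (n + 1) → 𝒳) × (Fin (n + 1) → 𝒴) → ℝ)
    (x : Fin (n + 1) → 𝒳) (y : Fin (n + 1) → 𝒴) (j : ℕ) : ℝ :=
  if h : j < n + 1 then prA p x y ⟨j, h⟩ / prB p x y ⟨j, h⟩ else 1

variable {p : (Fin (n + 1) → 𝒳) × (Fin (n + 1) → 𝒴) → ℝ}
  (x : Fin (n + 1) → 𝒳) (y : Fin (n + 1) → 𝒴)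

theorem prF_prod :
    ∏ i : Fin (n + 1), (prA p x y i / prB p x y i) =
      ∏ j ∈ Finset.range (n + 1), prF p x y j := by
  rw [← Fin.prod_univ_eq_prod_range (prF p x y) (n + 1)]
  exact Finset.prod_congr rfl fun i _ => by simp [prF, i.isLt]

theorem prF_update (i : Fin (n + 1)) (j : ℕ) (hj : j < i.1) (v : 𝒴) :
    prF p x (Function.update y i v) j = prF p x y j := by
  have hjn : j < n + 1 := by have := i.isLt; omega
  simp only [prF, dif_pos hjn]
  rw [prA_update x y i ⟨j, hjn⟩ (by simpa [Fin.lt_def] using hj) v,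
    prB_update x y i ⟨j, hjn⟩ (by simpa [Fin.le_def] using hj.le) v]

theorem claim_down (hpos : ∀ z, 0 < p z)
    (Hfac : ∀ y : Fin (n + 1) → 𝒴, prD p x y (n + 1) =
      pr p (fun z => z.1 = x) * ∏ j ∈ Finset.range (n + 1), prF p x y j) :
    ∀ m k, k + m = n + 1 → ∀ y : Fin (n + 1) → 𝒴,
      prD p x y k = pr p (fun z => z.1 = x) * ∏ j ∈ Finset.range k, prF p x y j := by
  intro m
  induction m with
  | zero => intro k hk y; rw [show k = n + 1 by omega]; exact Hfac y
  | succ m ih =>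
    intro k hk y
    have hkn : k < n + 1 := by omega
    set i : Fin (n + 1) := ⟨k, hkn⟩ with hi
    have IH := ih (k + 1) (by omega)
    have e1 : ∀ v : 𝒴, prD p x (Function.update y i v) (k + 1) =
        (pr p (fun z => z.1 = x) * ∏ j ∈ Finset.range k, prF p x y j) *
          (prA p x (Function.update y i v) i / prB p x y i) := by
      intro v
      rw [IH, Finset.prod_range_succ,
        Finset.prod_congr rfl fun j hj =>
          prF_update x y i j (Finset.mem_range.mp hj) v]
      have h3 : prF p x (Function.update y i v) k =
          prA p x (Function.update y i v) i / prB p x y i := by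
        simp only [prF, dif_pos hkn]
        rw [prB_update x y i i le_rfl v]
      rw [h3, mul_assoc]
    have e0 : prD p x y k = ∑ v : 𝒴, prD p x (Function.update y i v) (k + 1) :=
      (prD_sum x y i).symm
    rw [e0, Finset.sum_congr rfl fun v _ => e1 v, ← Finset.mul_sum]
    have : ∑ v : 𝒴, prA p x (Function.update y i v) i / prB p x y i = 1 := by
      rw [← Finset.sum_div, prA_sum x y i, div_self (prB_pos x y hpos i).ne']
    rw [this, mul_one]

end MAIN

section BRIDGE

variable {𝒳 𝒴 : Type} [Fintype 𝒳] [Fintype 𝒴] {n : ℕ}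
  {p : (Fin (n + 1) → 𝒳) × (Fin (n + 1) → 𝒴) → ℝ}
  (x : Fin (n + 1) → 𝒳) (y : Fin (n + 1) → 𝒴) (i' : Fin (n + 1))

theorem iff_g (z : (Fin (n + 1) → 𝒳) × (Fin (n + 1) → 𝒴)) :
    ((fun j : {k : Fin (n + 1) // i' < k} => z.1 j.1) = fun j => x j.1) ↔
      ∀ j, i' < j → z.1 j = x j := by
  rw [funext_iff]
  exact ⟨fun h j hj => h ⟨j, hj⟩, fun h j => h j.1 j.2⟩

theorem iff_h1 (z : (Fin (n + 1) → 𝒳) × (Fin (n + 1) → 𝒴)) :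
    (pref (fun w : (Fin (n + 1) → 𝒳) × (Fin (n + 1) → 𝒴) => w.1) i' z =
        fun j => x (Fin.castLE i'.isLt j)) ↔
      ∀ j, j ≤ i' → z.1 j = x j := by
  rw [funext_iff]
  unfold pref
  constructor
  · intro h j hj
    have hj' : j.1 < i'.1 + 1 := by
      have := Fin.le_def.mp hj; omega
    have e : Fin.castLE i'.isLt ⟨j.1, hj'⟩ = j := rfl
    have := h ⟨j.1, hj'⟩
    rwa [e] at this
  · intro h j
    apply h
    rw [Fin.le_def]
    have := j.isLt
    simp only [Fin.coe_castLE]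
    omega

theorem iff_h2 (z : (Fin (n + 1) → 𝒳) × (Fin (n + 1) → 𝒴)) :
    (spref (fun w : (Fin (n + 1) → 𝒳) × (Fin (n + 1) → 𝒴) => w.2) i' z =
        fun j => y (Fin.castLE i'.isLt.le j)) ↔
      ∀ j, j < i' → z.2 j = y j := by
  rw [funext_iff]
  unfold spref
  constructor
  · intro h j hj
    have hj' : j.1 < i'.1 := Fin.lt_def.mp hj
    have e : Fin.castLE i'.isLt.le ⟨j.1, hj'⟩ = j := rfl
    have := h ⟨j.1, hj'⟩
    rwa [e] at this
  · intro h j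
    apply h
    rw [Fin.lt_def]
    have := j.isLt
    simp only [Fin.coe_castLE]
    omega

theorem iff_x (z : (Fin (n + 1) → 𝒳) × (Fin (n + 1) → 𝒴)) :
    z.1 = x ↔ ((∀ j, i' < j → z.1 j = x j) ∧ ∀ j, j ≤ i' → z.1 j = x j) := by
  rw [funext_iff]
  constructor
  · intro h; exact ⟨fun j _ => h j, fun j _ => h j⟩
  · rintro ⟨h1, h2⟩ j
    rcases le_or_gt j i' with h | h
    · exact h2 j h
    · exact h1 j h

theorem iff_y (z : (Fin (n + 1) → 𝒳) × (Fin (n + 1) → 𝒴)) :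
    (∀ j : Fin (n + 1), (j : ℕ) < i'.1 + 1 → z.2 j = y j) ↔
      (z.2 i' = y i' ∧ ∀ j, j < i' → z.2 j = y j) := by
  constructor
  · intro h
    exact ⟨h i' (by omega), fun j hj => h j (by have := Fin.lt_def.mp hj; omega)⟩
  · rintro ⟨h0, h1⟩ j hj
    rcases eq_or_ne j i' with rfl | hne
    · exact h0
    · refine h1 j (Fin.lt_def.mpr ?_)
      have : (j : ℕ) ≠ (i' : ℕ) := fun h => hne (Fin.ext h)
      omega

theorem iff_y' (z : (Fin (n + 1) → 𝒳) × (Fin (n + 1) → 𝒴)) :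
    (∀ j : Fin (n + 1), (j : ℕ) < i'.1 → z.2 j = y j) ↔
      (∀ j, j < i' → z.2 j = y j) := by
  simp only [Fin.lt_def]

theorem ev_fgh :
    pr p (fun z => z.2 i' = y i' ∧
        ((fun j : {k : Fin (n + 1) // i' < k} => z.1 j.1) = fun j => x j.1) ∧
        ((pref (fun w : (Fin (n + 1) → 𝒳) × (Fin (n + 1) → 𝒴) => w.1) i' z,
          spref (fun w : (Fin (n + 1) → 𝒳) × (Fin (n + 1) → 𝒴) => w.2) i' z) =
          (fun j => x (Fin.castLE i'.isLt j), fun j => y (Fin.castLE i'.isLt.le j)))) =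
      prD p x y (i'.1 + 1) := by
  refine pr_congr p fun z => ?_
  rw [Prod.ext_iff]
  simp only [iff_g x i' z, iff_h1 x i' z, iff_h2 y i' z]
  rw [iff_x x i' z, iff_y y i' z]
  tauto

theorem ev_h :
    pr p (fun z =>
        ((pref (fun w : (Fin (n + 1) → 𝒳) × (Fin (n + 1) → 𝒴) => w.1) i' z,
          spref (fun w : (Fin (n + 1) → 𝒳) × (Fin (n + 1) → 𝒴) => w.2) i' z) =
          (fun j => x (Fin.castLE i'.isLt j), fun j => y (Fin.castLE i'.isLt.le j)))) =
      prB p x y i' := by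
  refine pr_congr p fun z => ?_
  rw [Prod.ext_iff]
  simp only [iff_h1 x i' z, iff_h2 y i' z]
  tauto

theorem ev_fh :
    pr p (fun z => z.2 i' = y i' ∧
        ((pref (fun w : (Fin (n + 1) → 𝒳) × (Fin (n + 1) → 𝒴) => w.1) i' z,
          spref (fun w : (Fin (n + 1) → 𝒳) × (Fin (n + 1) → 𝒴) => w.2) i' z) =
          (fun j => x (Fin.castLE i'.isLt j), fun j => y (Fin.castLE i'.isLt.le j)))) =
      prA p x y i' := by
  refine pr_congr p fun z => ?_
  rw [Prod.ext_iff]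
  simp only [iff_h1 x i' z, iff_h2 y i' z]
  tauto

theorem ev_gh :
    pr p (fun z =>
        ((fun j : {k : Fin (n + 1) // i' < k} => z.1 j.1) = fun j => x j.1) ∧
        ((pref (fun w : (Fin (n + 1) → 𝒳) × (Fin (n + 1) → 𝒴) => w.1) i' z,
          spref (fun w : (Fin (n + 1) → 𝒳) × (Fin (n + 1) → 𝒴) => w.2) i' z) =
          (fun j => x (Fin.castLE i'.isLt j), fun j => y (Fin.castLE i'.isLt.le j)))) =
      prD p x y i'.1 := by
  refine pr_congr p fun z => ?_
  rw [Prod.ext_iff]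
  simp only [iff_g x i' z, iff_h1 x i' z, iff_h2 y i' z]
  rw [iff_x x i' z, iff_y' y i' z]
  tauto

end BRIDGE

section TERMS

variable {𝒳 𝒴 : Type} [Fintype 𝒳] [Fintype 𝒴] {n : ℕ}
  {p : (Fin (n + 1) → 𝒳) × (Fin (n + 1) → 𝒴) → ℝ}

theorem condIndep_term (i' : Fin (n + 1))
    (hM : CondIndep p (fun z => z.2 i')
      (fun z => fun j : {k : Fin (n + 1) // i' < k} => z.1 j.1)
      (fun z => (pref (fun w : (Fin (n + 1) → 𝒳) × (Fin (n + 1) → 𝒴) => w.1) i' z,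
        spref (fun w : (Fin (n + 1) → 𝒳) × (Fin (n + 1) → 𝒴) => w.2) i' z)))
    (x : Fin (n + 1) → 𝒳) (y : Fin (n + 1) → 𝒴) :
    prD p x y (i'.1 + 1) * prB p x y i' = prA p x y i' * prD p x y i'.1 := by
  have := hM (y i') (fun j => x j.1)
    (fun j => x (Fin.castLE i'.isLt j), fun j => y (Fin.castLE i'.isLt.le j))
  rwa [ev_fgh x y i', ev_h x y i', ev_fh x y i', ev_gh x y i'] at this

theorem condIndep_of_term (i' : Fin (n + 1))
    (Hterm : ∀ (x : Fin (n + 1) → 𝒳) (y : Fin (n + 1) → 𝒴),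
      prD p x y (i'.1 + 1) * prB p x y i' = prA p x y i' * prD p x y i'.1) :
    CondIndep p (fun z => z.2 i')
      (fun z => fun j : {k : Fin (n + 1) // i' < k} => z.1 j.1)
      (fun z => (pref (fun w : (Fin (n + 1) → 𝒳) × (Fin (n + 1) → 𝒴) => w.1) i' z,
        spref (fun w : (Fin (n + 1) → 𝒳) × (Fin (n + 1) → 𝒴) => w.2) i' z)) := by
  intro a b c
  set x : Fin (n + 1) → 𝒳 := fun j =>
    if h : j ≤ i' then c.1 ⟨j.1, by have := Fin.le_def.mp h; omega⟩
    else b ⟨j, lt_of_not_ge h⟩ with hx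
  set y : Fin (n + 1) → 𝒴 := fun j =>
    if h : j < i' then c.2 ⟨j.1, Fin.lt_def.mp h⟩ else a with hy
  have hya : a = y i' := by simp [hy]
  have hxb : b = fun j : {k : Fin (n + 1) // i' < k} => x j.1 := by
    funext j
    simp only [hx]
    rw [dif_neg (not_le.mpr j.2)]
  have hc : c = (fun j => x (Fin.castLE i'.isLt j), fun j => y (Fin.castLE i'.isLt.le j)) := by
    refine Prod.ext ?_ ?_
    · funext j
      simp only [hx]
      have hle : Fin.castLE i'.isLt j ≤ i' := by
        rw [Fin.le_def]; simp only [Fin.coe_castLE]; have := j.isLt; omega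
      rw [dif_pos hle]
      congr 1
    · funext j
      simp only [hy]
      have hlt : Fin.castLE i'.isLt.le j < i' := by
        rw [Fin.lt_def]; simp only [Fin.coe_castLE]; exact j.isLt
      rw [dif_pos hlt]
      congr 1
  rw [hya, hxb, hc, ev_fgh x y i', ev_h x y i', ev_fh x y i', ev_gh x y i']
  exact Hterm x y

theorem prA_last (x : Fin (n + 1) → 𝒳) (y : Fin (n + 1) → 𝒴) :
    prA p x y (Fin.last n) = prD p x y (n + 1) := by
  refine pr_congr p fun z => ?_
  constructor
  · rintro ⟨h0, h1, h2⟩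
    refine ⟨funext fun j => h2 j (Fin.le_last j), fun j hj => ?_⟩
    rcases eq_or_ne j (Fin.last n) with rfl | hne
    · exact h0
    · exact h1 j (Fin.lt_def.mpr (by
        have : (j : ℕ) ≠ n := fun h => hne (Fin.ext h)
        have := j.isLt
        simp only [Fin.val_last]
        omega))
  · rintro ⟨h1, h2⟩
    exact ⟨h2 _ (by omega), fun j _ => h2 j (by omega), fun j _ => by rw [h1]⟩

theorem prB_last (x : Fin (n + 1) → 𝒳) (y : Fin (n + 1) → 𝒴) :
    prB p x y (Fin.last n) = prD p x y n := by
  refine pr_congr p fun z => ?_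
  constructor
  · rintro ⟨h1, h2⟩
    exact ⟨funext fun j => h2 j (Fin.le_last j),
      fun j hj => h1 j (Fin.lt_def.mpr (by simpa using hj))⟩
  · rintro ⟨h1, h2⟩
    exact ⟨fun j hj => h2 j (by simpa using Fin.lt_def.mp hj), fun j _ => by rw [h1]⟩

theorem fwd_term (hpos : ∀ z, 0 < p z)
    (Hfac : ∀ (x : Fin (n + 1) → 𝒳) (y : Fin (n + 1) → 𝒴), prD p x y (n + 1) =
      pr p (fun z => z.1 = x) * ∏ j ∈ Finset.range (n + 1), prF p x y j)
    (i' : Fin (n + 1)) (x : Fin (n + 1) → 𝒳) (y : Fin (n + 1) → 𝒴) :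
    prD p x y (i'.1 + 1) * prB p x y i' = prA p x y i' * prD p x y i'.1 := by
  have h1 := claim_down x hpos (fun y => Hfac x y) (n - i'.1) (i'.1 + 1)
    (by have := i'.isLt; omega) y
  have h2 := claim_down x hpos (fun y => Hfac x y) (n + 1 - i'.1) i'.1
    (by have := i'.isLt; omega) y
  rw [h1, h2, Finset.prod_range_succ]
  have hf : prF p x y i'.1 = prA p x y i' / prB p x y i' := by
    simp [prF, i'.isLt]
  rw [hf]
  have hB := (prB_pos x y hpos i').ne'
  field_simp

theorem claim_up (hpos : ∀ z, 0 < p z)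
    (Hterm : ∀ (i' : Fin (n + 1)) (x : Fin (n + 1) → 𝒳) (y : Fin (n + 1) → 𝒴),
      prD p x y (i'.1 + 1) * prB p x y i' = prA p x y i' * prD p x y i'.1)
    (x : Fin (n + 1) → 𝒳) (y : Fin (n + 1) → 𝒴) :
    ∀ k, k ≤ n + 1 → prD p x y k =
      pr p (fun z => z.1 = x) * ∏ j ∈ Finset.range k, prF p x y j := by
  intro k
  induction k with
  | zero => intro _; simp [prD_zero]
  | succ k ih =>
    intro hk
    have hkn : k < n + 1 := by omega
    have hB := (prB_pos x y hpos ⟨k, hkn⟩).ne'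
    have h1 := Hterm ⟨k, hkn⟩ x y
    have h2 := ih (by omega)
    rw [Finset.prod_range_succ, ← mul_assoc, ← h2]
    have hf : prF p x y k = prA p x y ⟨k, hkn⟩ / prB p x y ⟨k, hkn⟩ := by
      simp [prF, hkn]
    rw [hf]
    field_simp
    linarith [h1]

end TERMS

/-- on the canonical space, the conditional law of `Y^n` given `X^n`
factorizes causally, `P(y^n|x^n) = ∏_i P(y_i | y^{i-1}, x^i)`, iff for each
`i = 0, …, n-1` the Markov chain `Y_i ↔ (X^i, Y^{i-1}) ↔ (X_{i+1}, …, X_n)` holds. -/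
theorem causal_factorization_iff_markov
    {𝒳 𝒴 : Type} [Fintype 𝒳] [Fintype 𝒴] {n : ℕ}
    (p : (Fin (n + 1) → 𝒳) × (Fin (n + 1) → 𝒴) → ℝ)
    (hpos : ∀ z, 0 < p z) (hsum : ∑ z, p z = 1) :
    (∀ (x : Fin (n + 1) → 𝒳) (y : Fin (n + 1) → 𝒴),
        pr p (fun z => z.1 = x ∧ z.2 = y) / pr p (fun z => z.1 = x) =
        ∏ i : Fin (n + 1),
          pr p (fun z => z.2 i = y i ∧ (∀ j : Fin (n + 1), j < i → z.2 j = y j) ∧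
              (∀ j : Fin (n + 1), j ≤ i → z.1 j = x j)) /
          pr p (fun z => (∀ j : Fin (n + 1), j < i → z.2 j = y j) ∧
              (∀ j : Fin (n + 1), j ≤ i → z.1 j = x j)))
    ↔
    (∀ i : Fin n,
      CondIndep p (fun z => z.2 i.castSucc)
        (fun z => fun j : {k : Fin (n + 1) // i.castSucc < k} => z.1 j.1)
        (fun z => (pref (fun w : (Fin (n + 1) → 𝒳) × (Fin (n + 1) → 𝒴) => w.1)
            i.castSucc z,
          spref (fun w : (Fin (n + 1) → 𝒳) × (Fin (n + 1) → 𝒴) => w.2)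
            i.castSucc z))) := by
  have hne : Nonempty ((Fin (n + 1) → 𝒳) × (Fin (n + 1) → 𝒴)) := by
    by_contra h
    rw [not_nonempty_iff] at h
    simp [Finset.univ_eq_empty] at hsum
  obtain ⟨x0, y0⟩ := hne.some
  have hPx : ∀ x : Fin (n + 1) → 𝒳, 0 < pr p (fun z => z.1 = x) :=
    fun x => pr_pos hpos (x, y0) rfl
  constructor
  · intro Hfac i
    have Hfac' : ∀ (x : Fin (n + 1) → 𝒳) (y : Fin (n + 1) → 𝒴),
        prD p x y (n + 1) =
          pr p (fun z => z.1 = x) * ∏ j ∈ Finset.range (n + 1), prF p x y j := by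
      intro x y
      have h := Hfac x y
      rw [div_eq_iff (hPx x).ne'] at h
      have e := prF_prod (p := p) x y
      simp only [prA, prB] at e
      rw [prD_last, h, e]
      ring
    exact condIndep_of_term i.castSucc (fwd_term hpos Hfac' i.castSucc)
  · intro hM x y
    have Hterm : ∀ (i' : Fin (n + 1)) (x : Fin (n + 1) → 𝒳) (y : Fin (n + 1) → 𝒴),
        prD p x y (i'.1 + 1) * prB p x y i' = prA p x y i' * prD p x y i'.1 := by
      intro i' x y
      by_cases h : i'.1 < n
      · have hM' := hM ⟨i'.1, h⟩
        have he : (⟨i'.1, h⟩ : Fin n).castSucc = i' := Fin.ext rfl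
        rw [he] at hM'
        exact condIndep_term i' hM' x y
      · have he : i' = Fin.last n := Fin.ext (by
          have := i'.isLt
          simp only [Fin.val_last]
          omega)
        rw [he]
        simp only [Fin.val_last]
        rw [prA_last, prB_last]
    have Hc := claim_up hpos Hterm x y (n + 1) le_rfl
    have e := prF_prod (p := p) x y
    simp only [prA, prB] at e
    rw [← prD_last (p := p) x y, Hc, ← e, mul_comm, mul_div_assoc,
      div_self (hPx x).ne', mul_one]
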